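/- arXiv:1606.09510 — 2 statements merged into one kernel-verified Lean document; each statement's English description precedes it below -/
import Mathlib

section
/- Let M ≥ 1, N > 0, and let σ_i² > 0, b_i² ≥ 0 for i = 1,…,M. Define S(γ) = Σ_i [σ_i² b_i² / (σ_i² + Nγ)²]·(γ(√((γ+4)/γ) − 1) − 4) + Σ_i [b_i² / (σ_i² + Nγ)²]·Nγ((√((γ+4)/γ) − 1)γ + 2√((γ+4)/γ) − 4) for γ > 0. Then lim_{γ→0⁺} S(γ) = −4 Σ_i b_i²/σ_i². -/
open Real Filter Set

theorem copra_limit_zero (M : ℕ) (hM : 1 ≤ M) (N : ℝ) (hN : 0 < N)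
    (σ2 b2 : Fin M → ℝ) (hσ : ∀ i, 0 < σ2 i) (hb : ∀ i, 0 ≤ b2 i)
    (S : ℝ → ℝ)
    (hS : ∀ γ > (0:ℝ), S γ =
      (∑ i, σ2 i * b2 i / (σ2 i + N * γ) ^ 2) *
        (γ * (Real.sqrt ((γ + 4) / γ) - 1) - 4)
      + (∑ i, b2 i / (σ2 i + N * γ) ^ 2) *
        (N * γ * ((Real.sqrt ((γ + 4) / γ) - 1) * γ + 2 * Real.sqrt ((γ + 4) / γ) - 4))) :
    Tendsto S (nhdsWithin 0 (Set.Ioi 0)) (nhds (-4 * ∑ i, b2 i / σ2 i)) := by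
  set g : ℝ → ℝ := fun γ =>
    (∑ i, σ2 i * b2 i / (σ2 i + N * γ) ^ 2) * (Real.sqrt (γ * (γ + 4)) - γ - 4)
    + (∑ i, b2 i / (σ2 i + N * γ) ^ 2) *
      (N * (γ * Real.sqrt (γ * (γ + 4)) - γ ^ 2 + 2 * Real.sqrt (γ * (γ + 4)) - 4 * γ)) with hg
  have hcont : ContinuousAt g 0 := by
    have hsum1 : ContinuousAt (fun γ : ℝ => ∑ i, σ2 i * b2 i / (σ2 i + N * γ) ^ 2) 0 := by
      apply tendsto_finset_sum
      intro i _
      apply ContinuousAt.div continuousAt_const (by fun_prop)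
      have := hσ i
      simp only [mul_zero, add_zero]
      positivity
    have hsum2 : ContinuousAt (fun γ : ℝ => ∑ i, b2 i / (σ2 i + N * γ) ^ 2) 0 := by
      apply tendsto_finset_sum
      intro i _
      apply ContinuousAt.div continuousAt_const (by fun_prop)
      have := hσ i
      simp only [mul_zero, add_zero]
      positivity
    have hsqrt : ContinuousAt (fun γ : ℝ => Real.sqrt (γ * (γ + 4))) 0 :=
      (Real.continuous_sqrt.comp (by continuity)).continuousAt
    exact (hsum1.mul ((hsqrt.sub continuousAt_id).sub continuousAt_const)).add
      (hsum2.mul (continuousAt_const.mul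
        ((((continuousAt_id.mul hsqrt).sub (by fun_prop)).add
          (continuousAt_const.mul hsqrt)).sub (by fun_prop))))
  have hg0 : g 0 = -4 * ∑ i, b2 i / σ2 i := by
    simp only [hg, mul_zero, add_zero, zero_mul, Real.sqrt_zero, zero_sub, zero_pow,
      sub_zero, zero_add, sub_self, neg_sub]
    have : ∀ i : Fin M, σ2 i * b2 i / (σ2 i) ^ 2 = b2 i / σ2 i := by
      intro i
      have := (hσ i).ne'
      field_simp
    rw [Finset.sum_congr rfl fun i _ => this i]
    ring
  have hlim : Tendsto g (nhdsWithin 0 (Set.Ioi 0)) (nhds (-4 * ∑ i, b2 i / σ2 i)) := by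
    rw [← hg0]
    exact hcont.continuousWithinAt.tendsto
  refine hlim.congr' ?_
  filter_upwards [self_mem_nhdsWithin] with γ hγ
  have hγ0 : (0:ℝ) < γ := hγ
  have hne : γ ≠ 0 := ne_of_gt hγ0
  rw [hS γ hγ0]
  have hs : Real.sqrt ((γ + 4) / γ) = Real.sqrt (γ * (γ + 4)) / γ := by
    rw [show (γ + 4) / γ = γ * (γ + 4) / γ ^ 2 by field_simp,
      Real.sqrt_div (by positivity), Real.sqrt_sq hγ0.le]
  rw [hg, hs]
  field_simp
end

section
/- For each fixed σ² > 0 and N > 0, the function F₁(γ) = [σ²/(σ² + Nγ)²]·(4 + γ − √γ·√(γ+4)) is completely monotone on (0,∞) for n = 0, 1: that is, F₁(γ) ≥ 0 and F₁'(γ) ≤ 0 for all γ > 0. -/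
open Real

theorem F1_completely_monotone_order_one (σ2 N : ℝ) (hσ : 0 < σ2) (hN : 0 < N)
    (F1 : ℝ → ℝ)
    (hF1 : ∀ γ : ℝ, F1 γ =
      σ2 / (σ2 + N * γ) ^ 2 * (4 + γ - Real.sqrt γ * Real.sqrt (γ + 4))) :
    ∀ γ > (0:ℝ), 0 ≤ F1 γ ∧ deriv F1 γ ≤ 0 := by
  have hF1' : F1 = fun γ => σ2 / (σ2 + N * γ) ^ 2 *
      (4 + γ - Real.sqrt γ * Real.sqrt (γ + 4)) := funext hF1
  subst hF1'
  intro x hx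
  set s := Real.sqrt x with hs_def
  set t := Real.sqrt (x + 4) with ht_def
  have hx4 : (0:ℝ) < x + 4 := by linarith
  have hs : 0 < s := Real.sqrt_pos.mpr hx
  have ht : 0 < t := Real.sqrt_pos.mpr hx4
  have hs2 : s ^ 2 = x := Real.sq_sqrt hx.le
  have ht2 : t ^ 2 = x + 4 := Real.sq_sqrt hx4.le
  have ha : 0 < σ2 + N * x := by positivity
  -- nonnegativity of the second factor
  have hst : s * t ≤ x + 4 := by
    have hstle : s ≤ t := Real.sqrt_le_sqrt (by linarith)
    calc s * t ≤ t * t := by nlinarith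
    _ = x + 4 := by nlinarith
  have hg : 0 ≤ 4 + x - s * t := by linarith
  -- derivative computations
  have hden : HasDerivAt (fun y : ℝ => (σ2 + N * y) ^ 2)
      (2 * (σ2 + N * x) ^ 1 * N) x := by
    simpa using (((hasDerivAt_id x).const_mul N).const_add σ2).fun_pow 2
  have hh : HasDerivAt (fun y : ℝ => σ2 / (σ2 + N * y) ^ 2)
      ((0 * (σ2 + N * x) ^ 2 - σ2 * (2 * (σ2 + N * x) ^ 1 * N)) /
        ((σ2 + N * x) ^ 2) ^ 2) x :=
    (hasDerivAt_const x σ2).div hden (by positivity)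
  have hsder : HasDerivAt Real.sqrt (1 / (2 * s)) x := Real.hasDerivAt_sqrt hx.ne'
  have htder : HasDerivAt (fun y : ℝ => Real.sqrt (y + 4)) (1 / (2 * t) * 1) x :=
    (Real.hasDerivAt_sqrt hx4.ne').comp x ((hasDerivAt_id x).add_const 4)
  have hgder : HasDerivAt (fun y : ℝ => 4 + y - Real.sqrt y * Real.sqrt (y + 4))
      (1 - (1 / (2 * s) * t + s * (1 / (2 * t) * 1))) x := by
    have h1 : HasDerivAt (fun y : ℝ => 4 + y) 1 x := by
      simpa using (hasDerivAt_id x).const_add (4:ℝ)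
    exact h1.sub (hsder.mul htder)
  have hF : HasDerivAt (fun y : ℝ => σ2 / (σ2 + N * y) ^ 2 *
      (4 + y - Real.sqrt y * Real.sqrt (y + 4)))
      ((0 * (σ2 + N * x) ^ 2 - σ2 * (2 * (σ2 + N * x) ^ 1 * N)) /
        ((σ2 + N * x) ^ 2) ^ 2 * (4 + x - s * t) +
       σ2 / (σ2 + N * x) ^ 2 * (1 - (1 / (2 * s) * t + s * (1 / (2 * t) * 1)))) x :=
    hh.mul hgder
  constructor
  · have : 0 ≤ σ2 / (σ2 + N * x) ^ 2 := by positivity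
    exact mul_nonneg this hg
  · rw [hF.deriv]
    have hh' : (0 * (σ2 + N * x) ^ 2 - σ2 * (2 * (σ2 + N * x) ^ 1 * N)) /
        ((σ2 + N * x) ^ 2) ^ 2 ≤ 0 := by
      apply div_nonpos_of_nonpos_of_nonneg
      · simp only [pow_one]
        nlinarith [mul_pos (mul_pos hσ ha) hN]
      · positivity
    have hg' : 1 - (1 / (2 * s) * t + s * (1 / (2 * t) * 1)) ≤ 0 := by
      have key : 1 / (2 * s) * t + s * (1 / (2 * t) * 1) - 1 =
          (s - t) ^ 2 / (2 * s * t) := by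
        field_simp
        ring
      have hpos : 0 ≤ (s - t) ^ 2 / (2 * s * t) := by positivity
      linarith [key]
    have hhpos : 0 ≤ σ2 / (σ2 + N * x) ^ 2 := by positivity
    have := mul_nonpos_of_nonpos_of_nonneg hh' hg
    have := mul_nonpos_of_nonneg_of_nonpos hhpos hg'
    linarith
end
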